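/- For every N ≥ 2, every KC-PMI P on N parties, and every party ℓ ∈ ⟦N⟧, let Q^ℓ = { e_X : e_X is a hyperedge of H_P and ℓ ∈ X }. Then either v_ℓ is an isolated vertex of H_P (contained in no hyperedge) and Q^ℓ = ∅, or Q^ℓ is contained in exactly one max-clique of the line graph L_{H_P}. -/
import Mathlib


namespace HEC

/-- The parties `⟦N⟧ = {0,1,…,N}`, where `0` is the purifier. -/
abbrev Party (N : ℕ) := Fin (N + 1)

/-- A collection of parties. -/
abbrev PSet (N : ℕ) := Finset (Party N)

/-- MI instances: unordered pairs of subsets of parties. -/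
abbrev MI (N : ℕ) := Sym2 (PSet N)

/-- `m` is an MI instance, i.e. an unordered pair of disjoint nonempty subsets of `⟦N⟧`. -/
def IsMIInst {N : ℕ} (m : MI N) : Prop :=
  ∃ Y Z : PSet N, m = s(Y, Z) ∧ Y.Nonempty ∧ Z.Nonempty ∧ Disjoint Y Z

/-- The MI-poset order: `{Y,Z} ⪯ {Y',Z'}` iff (`Y ⊆ Y'` and `Z ⊆ Z'`) or
(`Y ⊆ Z'` and `Z ⊆ Y'`).  (The two cases are absorbed by the existential over
representatives of the unordered pairs.) -/
def MIle {N : ℕ} (m m' : MI N) : Prop :=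
  ∃ Y Z Y' Z' : PSet N, m = s(Y, Z) ∧ m' = s(Y', Z') ∧ Y ⊆ Y' ∧ Z ⊆ Z'

/-- An `N`-party entropy vector, extended to all subsets of `⟦N⟧` by the purification
convention: `S ∅ = 0` and `S Y = S (⟦N⟧ \ Y)` whenever `0 ∈ Y`. -/
structure EntropyVec (N : ℕ) where
  S : PSet N → ℝ
  S_empty : S ∅ = 0
  S_purify : ∀ Y : PSet N, (0 : Party N) ∈ Y → S Y = S (Finset.univ \ Y)

/-- Mutual information `I(Y:Z) = S_Y + S_Z - S_{Y∪Z}`. -/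
def EntropyVec.I {N : ℕ} (v : EntropyVec N) (Y Z : PSet N) : ℝ :=
  v.S Y + v.S Z - v.S (Y ∪ Z)

/-- Membership in the subadditivity cone: `I(Y:Z) ≥ 0` for every MI instance. -/
def EntropyVec.InSAC {N : ℕ} (v : EntropyVec N) : Prop :=
  ∀ Y Z : PSet N, Y.Nonempty → Z.Nonempty → Disjoint Y Z → 0 ≤ v.I Y Z

/-- The pattern of marginal independence of `v`: the MI instances vanishing on `v`. -/
def EntropyVec.PMI {N : ℕ} (v : EntropyVec N) : Set (MI N) :=
  {m | ∃ Y Z : PSet N, m = s(Y, Z) ∧ Y.Nonempty ∧ Z.Nonempty ∧ Disjoint Y Z ∧ v.I Y Z = 0}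

/-- `P` is a down-set in the MI-poset. -/
def IsMIDownSet {N : ℕ} (P : Set (MI N)) : Prop :=
  ∀ m m' : MI N, IsMIInst m → m' ∈ P → MIle m m' → m ∈ P

/-- `P` is a KC-PMI: the PMI of some entropy vector in the subadditivity cone,
which moreover is a down-set in the MI-poset. -/
def IsKCPMI {N : ℕ} (P : Set (MI N)) : Prop :=
  (∃ v : EntropyVec N, v.InSAC ∧ P = v.PMI) ∧ IsMIDownSet P

/-- The β-set of `X`: all MI instances `{Y,Z}` with `Y ∪ Z = X`. -/
def betaSet {N : ℕ} (X : PSet N) : Set (MI N) :=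
  {m | ∃ Y Z : PSet N, m = s(Y, Z) ∧ Y.Nonempty ∧ Z.Nonempty ∧ Disjoint Y Z ∧ Y ∪ Z = X}

/-- The antichain `A` of minimal elements of `P̄ = M_N ∖ P`. -/
def minimalMI {N : ℕ} (P : Set (MI N)) : Set (MI N) :=
  {m | IsMIInst m ∧ m ∉ P ∧ ∀ m' : MI N, IsMIInst m' → m' ∉ P → MIle m' m → m' = m}

/-- `β(X)` is positive: `β(X) ⊆ P̄`. -/
def BPos {N : ℕ} (P : Set (MI N)) (X : PSet N) : Prop :=
  ∀ m ∈ betaSet X, m ∉ P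

/-- `β(X)` is vanishing: `β(X) ⊆ P`. -/
def BVan {N : ℕ} (P : Set (MI N)) (X : PSet N) : Prop :=
  betaSet X ⊆ P

/-- `β(X)` is partial: it has elements both in `P` and in `P̄`. -/
def BPart {N : ℕ} (P : Set (MI N)) (X : PSet N) : Prop :=
  (∃ m ∈ betaSet X, m ∈ P) ∧ (∃ m ∈ betaSet X, m ∉ P)

/-- `β(X)` is essential: `β(X) ∩ A ≠ ∅`. -/
def BEss {N : ℕ} (P : Set (MI N)) (X : PSet N) : Prop :=
  ∃ m ∈ betaSet X, m ∈ minimalMI P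

/-- `β(X)` is completely essential: `β(X) ⊆ A`. -/
def BCEss {N : ℕ} (P : Set (MI N)) (X : PSet N) : Prop :=
  betaSet X ⊆ minimalMI P

/-- `β(X)` is non-essential: `β(X) ∩ A = ∅`. -/
def BNEss {N : ℕ} (P : Set (MI N)) (X : PSet N) : Prop :=
  ∀ m ∈ betaSet X, m ∉ minimalMI P

/-- `pos_<(Y)`: the proper subsystems `Z ⊊ Y` with `|Z| ≥ 2` and `β(Z)` positive. -/
def posBelow {N : ℕ} (P : Set (MI N)) (Y : PSet N) : Set (PSet N) :=
  {Z | Z ⊂ Y ∧ 2 ≤ Z.card ∧ BPos P Z}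

/-- `Max(pos_<(Y))`: the inclusion-maximal elements of `pos_<(Y)`. -/
def maxPosBelow {N : ℕ} (P : Set (MI N)) (Y : PSet N) : Set (PSet N) :=
  {Z | Z ∈ posBelow P Y ∧ ∀ Z' ∈ posBelow P Y, Z ⊆ Z' → Z = Z'}

/-- The MI instance `m = {Y,Z}` splits `X` if `X ∩ Y ≠ ∅` and `X ∩ Z ≠ ∅`. -/
def Splits {N : ℕ} (m : MI N) (X : PSet N) : Prop :=
  ∃ Y Z : PSet N, m = s(Y, Z) ∧ (X ∩ Y).Nonempty ∧ (X ∩ Z).Nonempty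

/-- The hyperedges of the correlation hypergraph `H_P`: one hyperedge `e_X` for each
`X ⊆ ⟦N⟧` (with `|X| ≥ 2`) whose β-set is positive.  Vertices `v_ℓ` are identified
with the parties `ℓ ∈ ⟦N⟧`, and hyperedges with the corresponding subsystems. -/
def Hedge {N : ℕ} (P : Set (MI N)) : Set (PSet N) :=
  {X | 2 ≤ X.card ∧ BPos P X}

/-- The hyperedges of the sub-hypergraph `H_Y`: the hyperedges `e_Z` with `Z ⊊ Y`. -/
def subEdges {N : ℕ} (P : Set (MI N)) (Y : PSet N) : Set (PSet N) :=
  {Z | Z ⊂ Y ∧ Z ∈ Hedge P}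

/-- One step in a hypergraph with hyperedge set `E`: `a` and `b` lie in a common
hyperedge. -/
def hStep {N : ℕ} (E : Set (PSet N)) (a b : Party N) : Prop :=
  ∃ e ∈ E, a ∈ e ∧ b ∈ e

/-- Connectivity of the hypergraph with vertex set `V` and hyperedge set `E`:
every two vertices are joined by a path (a one-vertex hypergraph is connected). -/
def hConn {N : ℕ} (V : PSet N) (E : Set (PSet N)) : Prop :=
  ∀ a ∈ V, ∀ b ∈ V, Relation.ReflTransGen (hStep E) a b

/-- The vertex set of the connected component of `a` in the hypergraph with
vertex set `V` and hyperedge set `E`. -/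
def hComp {N : ℕ} (V : PSet N) (E : Set (PSet N)) (a : Party N) : Set (Party N) :=
  {b | b ∈ V ∧ Relation.ReflTransGen (hStep E) a b}

/-- A clique of the line graph `L_{H_P}`: a set of hyperedges of `H_P` which are
pairwise adjacent (distinct hyperedges being adjacent iff they intersect). -/
def IsLineClique {N : ℕ} (P : Set (MI N)) (Q : Set (PSet N)) : Prop :=
  Q ⊆ Hedge P ∧ ∀ e ∈ Q, ∀ f ∈ Q, e ≠ f → (e ∩ f).Nonempty

/-- A max-clique of the line graph `L_{H_P}`: a (nonempty) clique which is maximal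
under inclusion. -/
def IsMaxClique {N : ℕ} (P : Set (MI N)) (Q : Set (PSet N)) : Prop :=
  Q.Nonempty ∧ IsLineClique P Q ∧ ∀ Q' : Set (PSet N), IsLineClique P Q' → Q ⊆ Q' → Q = Q'

/-- `Q^∩`: the intersection of the hyperedges in `Q`, viewed as sets of vertices. -/
def qInter {N : ℕ} (Q : Set (PSet N)) : Set (Party N) :=
  {ℓ | ∀ e ∈ Q, ℓ ∈ e}

section Aux

variable {N : ℕ}

lemma Scompl (v : EntropyVec N) (Y : PSet N) : v.S Y = v.S (Finset.univ \ Y) := by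
  by_cases h : (0 : Party N) ∈ Y
  · exact v.S_purify Y h
  · have h0 : (0 : Party N) ∈ Finset.univ \ Y := by simp [h]
    have h2 := v.S_purify _ h0
    rw [Finset.sdiff_sdiff_self_left, Finset.univ_inter] at h2
    exact h2.symm

lemma I_comm (v : EntropyVec N) (Y Z : PSet N) : v.I Y Z = v.I Z Y := by
  unfold EntropyVec.I; rw [Finset.union_comm]; ring

lemma I_empty (v : EntropyVec N) (Y : PSet N) : v.I Y ∅ = 0 := by
  unfold EntropyVec.I; rw [Finset.union_empty, v.S_empty]; ring

lemma four_id (v : EntropyVec N) (X Y Z : PSet N) :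
    v.I X (Y ∪ Z) + v.I Y Z = v.I (X ∪ Y) Z + v.I X Y := by
  unfold EntropyVec.I; rw [Finset.union_assoc]; ring

lemma key_id (v : EntropyVec N) {A B : PSet N} (h : Disjoint A B) :
    v.I A B + v.I A (Finset.univ \ (A ∪ B)) = 2 * v.S A := by
  have h1 : Finset.univ \ (A ∪ (Finset.univ \ (A ∪ B))) = B := by
    ext x
    have hx : x ∈ A → x ∉ B := fun ha hb => Finset.disjoint_left.mp h ha hb
    simp only [Finset.mem_sdiff, Finset.mem_univ, Finset.mem_union, true_and, not_or, not_and,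
      not_not]
    tauto
  have h2 := Scompl v (A ∪ B)
  have h3 := Scompl v (A ∪ (Finset.univ \ (A ∪ B)))
  rw [h1] at h3
  unfold EntropyVec.I
  linarith

lemma exists_split (v : EntropyVec N) {P : Set (MI N)} (hP : P = v.PMI) {A : PSet N}
    (h : ¬ BPos P A) :
    ∃ Y Z : PSet N, Y ∪ Z = A ∧ Y.Nonempty ∧ Z.Nonempty ∧ Disjoint Y Z ∧ v.I Y Z = 0 := by
  unfold BPos at h
  push_neg at h
  obtain ⟨m, hmb, hmP⟩ := h
  obtain ⟨Y, Z, hm, hY, hZ, hd, hu⟩ := hmb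
  rw [hP] at hmP
  obtain ⟨Y', Z', hm', _, _, _, hI⟩ := hmP
  rw [hm, Sym2.eq_iff] at hm'
  rcases hm' with ⟨rfl, rfl⟩ | ⟨rfl, rfl⟩
  · exact ⟨Y, Z, hu, hY, hZ, hd, hI⟩
  · exact ⟨Y, Z, hu, hY, hZ, hd, (I_comm v Y Z).trans hI⟩

lemma zero_blocked (v : EntropyVec N) (hv : v.InSAC) {P : Set (MI N)} (hP : P = v.PMI)
    {ℓ : Party N} {e : PSet N} (hle : ℓ ∉ e)
    (hbl : ∀ X, X ∈ Hedge P → ℓ ∈ X → (X ∩ e).Nonempty) :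
    ∀ n : ℕ, ∀ B : PSet N, B.card ≤ n → B.Nonempty → ℓ ∉ B → Disjoint B e →
      v.I {ℓ} B = 0 := by
  intro n
  induction n with
  | zero =>
    intro B hc hne _ _
    have := Finset.card_pos.mpr hne
    omega
  | succ n ih =>
    intro B hc hne hlB hdBe
    have hAne : insert ℓ B ∉ Hedge P := by
      intro hA
      obtain ⟨x, hx⟩ := hbl _ hA (Finset.mem_insert_self ℓ B)
      rw [Finset.mem_inter] at hx
      rcases Finset.mem_insert.mp hx.1 with rfl | hxB
      · exact hle hx.2
      · exact (Finset.disjoint_left.mp hdBe hxB) hx.2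
    have hcard2 : 2 ≤ (insert ℓ B).card := by
      rw [Finset.card_insert_of_notMem hlB]
      have := Finset.card_pos.mpr hne
      omega
    have hnpos : ¬ BPos P (insert ℓ B) := fun hpos => hAne ⟨hcard2, hpos⟩
    obtain ⟨Y, Z, hu, hY, hZ, hd, hI⟩ := exists_split v hP hnpos
    have main : ∀ Y' Z' : PSet N, Y' ∪ Z' = insert ℓ B → Z'.Nonempty → Disjoint Y' Z' →
        v.I Y' Z' = 0 → ℓ ∈ Y' → v.I {ℓ} B = 0 := by
      intro Y Z hu hZ hd hI hlY
      have hlZ : ℓ ∉ Z := Finset.disjoint_left.mp hd hlY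
      have hYeq : Y = insert ℓ (Y.erase ℓ) := (Finset.insert_erase hlY).symm
      have hZB : Z ⊆ B := by
        intro z hz
        have hzA : z ∈ insert ℓ B := hu ▸ Finset.mem_union_right Y hz
        rcases Finset.mem_insert.mp hzA with rfl | h
        · exact absurd hz hlZ
        · exact h
      have hB₁B : Y.erase ℓ ⊆ B := by
        intro z hz
        have hzY := Finset.mem_of_mem_erase hz
        have hzl : z ≠ ℓ := Finset.ne_of_mem_erase hz
        have hzA : z ∈ insert ℓ B := hu ▸ Finset.mem_union_left Z hzY
        rcases Finset.mem_insert.mp hzA with h | h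
        · exact absurd h hzl
        · exact h
      have hsplit : Y.erase ℓ ∪ Z = B := by
        apply Finset.Subset.antisymm (Finset.union_subset hB₁B hZB)
        intro x hx
        have hxA : x ∈ Y ∪ Z := by rw [hu]; exact Finset.mem_insert_of_mem hx
        have hxl : x ≠ ℓ := fun h => hlB (h ▸ hx)
        rcases Finset.mem_union.mp hxA with h | h
        · exact Finset.mem_union_left _ (Finset.mem_erase.mpr ⟨hxl, h⟩)
        · exact Finset.mem_union_right _ h
      rcases (Y.erase ℓ).eq_empty_or_nonempty with hB₁e | hB₁ne
      · have hZeq : Z = B := by rw [← hsplit, hB₁e, Finset.empty_union]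
        have hYsing : Y = {ℓ} := by rw [hYeq, hB₁e]; rfl
        rw [← hZeq, ← hYsing]; exact hI
      · have hdisj₁ : Disjoint (Y.erase ℓ) Z := hd.mono_left (Finset.erase_subset ℓ Y)
        have hc1 : (Y.erase ℓ).card ≤ n := by
          have h1 : (Y.erase ℓ).card + Z.card = B.card := by
            rw [← Finset.card_union_of_disjoint hdisj₁, hsplit]
          have := Finset.card_pos.mpr hZ
          omega
        have hIH : v.I {ℓ} (Y.erase ℓ) = 0 :=
          ih (Y.erase ℓ) hc1 hB₁ne (Finset.notMem_erase ℓ Y)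
            (Finset.disjoint_of_subset_left hB₁B hdBe)
        have hid := four_id v {ℓ} (Y.erase ℓ) Z
        rw [hsplit] at hid
        have h1 : v.I ({ℓ} ∪ Y.erase ℓ) Z = 0 := by
          rw [← Finset.insert_eq, ← hYeq]; exact hI
        have hnn1 : 0 ≤ v.I {ℓ} B :=
          hv _ _ (Finset.singleton_nonempty ℓ) hne (Finset.disjoint_singleton_left.mpr hlB)
        have hnn2 : 0 ≤ v.I (Y.erase ℓ) Z := hv _ _ hB₁ne hZ hdisj₁
        linarith
    have hlYZ : ℓ ∈ Y ∪ Z := by rw [hu]; exact Finset.mem_insert_self ℓ B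
    rcases Finset.mem_union.mp hlYZ with h | h
    · exact main Y Z hu hZ hd hI h
    · exact main Z Y (by rw [Finset.union_comm]; exact hu) hY hd.symm
        ((I_comm v Z Y).trans hI) h

lemma Sl_pos (v : EntropyVec N) (hv : v.InSAC) {P : Set (MI N)} (hP : P = v.PMI)
    {ℓ : Party N} {X₀ : PSet N} (hX : X₀ ∈ Hedge P) (hl : ℓ ∈ X₀) :
    0 < v.S {ℓ} := by
  obtain ⟨hc, hpos⟩ := hX
  have hD : (X₀ \ {ℓ}).Nonempty := by
    obtain ⟨b, hb, hbne⟩ := Finset.exists_mem_ne (show 1 < X₀.card by omega) ℓ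
    exact ⟨b, Finset.mem_sdiff.mpr ⟨hb, by simp [hbne]⟩⟩
  have hu : {ℓ} ∪ (X₀ \ {ℓ}) = X₀ := by
    ext x
    simp only [Finset.mem_union, Finset.mem_sdiff, Finset.mem_singleton]
    constructor
    · rintro (rfl | ⟨h, _⟩)
      · exact hl
      · exact h
    · intro h
      rcases eq_or_ne x ℓ with rfl | hne
      · exact Or.inl rfl
      · exact Or.inr ⟨h, hne⟩
  have hdisj : Disjoint ({ℓ} : PSet N) (X₀ \ {ℓ}) := by
    rw [Finset.disjoint_singleton_left]
    simp
  have hmem : s(({ℓ} : PSet N), X₀ \ {ℓ}) ∈ betaSet X₀ :=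
    ⟨{ℓ}, X₀ \ {ℓ}, rfl, Finset.singleton_nonempty ℓ, hD, hdisj, hu⟩
  have hnP := hpos _ hmem
  have hIne : v.I {ℓ} (X₀ \ {ℓ}) ≠ 0 := by
    intro h0
    exact hnP (by
      rw [hP]
      exact ⟨{ℓ}, X₀ \ {ℓ}, rfl, Finset.singleton_nonempty ℓ, hD, hdisj, h0⟩)
  have hIpos : 0 < v.I {ℓ} (X₀ \ {ℓ}) :=
    lt_of_le_of_ne (hv _ _ (Finset.singleton_nonempty ℓ) hD hdisj) (Ne.symm hIne)
  have hkey := key_id v hdisj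
  have hC : 0 ≤ v.I {ℓ} (Finset.univ \ ({ℓ} ∪ (X₀ \ {ℓ}))) := by
    rcases (Finset.univ \ ({ℓ} ∪ (X₀ \ {ℓ}))).eq_empty_or_nonempty with h | h
    · rw [h, I_empty]
    · refine hv _ _ (Finset.singleton_nonempty ℓ) h ?_
      rw [Finset.disjoint_singleton_left]
      simp
  linarith

end Aux

/-- For every KC-PMI `P` and party `ℓ`, with
`Q^ℓ = { e_X : e_X a hyperedge of H_P with ℓ ∈ X }`: either `v_ℓ` is an isolated
vertex of `H_P` (contained in no hyperedge) and `Q^ℓ = ∅`, or `Q^ℓ` is contained in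
exactly one max-clique of `L_{H_P}`. -/
theorem statement16 {N : ℕ} (hN : 2 ≤ N) (P : Set (MI N)) (hP : IsKCPMI P)
    (ℓ : Party N) :
    ((∀ X ∈ Hedge P, ℓ ∉ X) ∧ {X ∈ Hedge P | ℓ ∈ X} = (∅ : Set (PSet N))) ∨
    (∃! Q : Set (PSet N), IsMaxClique P Q ∧ {X ∈ Hedge P | ℓ ∈ X} ⊆ Q) := by
  by_cases hiso : ∀ X ∈ Hedge P, ℓ ∉ X
  · left
    refine ⟨hiso, ?_⟩
    ext X
    simp only [Set.mem_setOf_eq, Set.mem_empty_iff_false, iff_false, not_and]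
    exact fun hX => hiso X hX
  · right
    push_neg at hiso
    obtain ⟨X₀, hX₀, hlX₀⟩ := hiso
    obtain ⟨⟨v, hv, hPv⟩, _⟩ := hP
    set Qs : Set (PSet N) := {Y | Y ∈ Hedge P ∧ ∀ f ∈ Hedge P, ℓ ∈ f → (Y ∩ f).Nonempty}
      with hQsdef
    have hQl : {X ∈ Hedge P | ℓ ∈ X} ⊆ Qs := by
      rintro X ⟨hX, hlX⟩
      exact ⟨hX, fun f hf hlf => ⟨ℓ, Finset.mem_inter.mpr ⟨hlX, hlf⟩⟩⟩
    -- the key lemma: any two members of Qs intersect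
    have hkey : ∀ a ∈ Qs, ∀ b ∈ Qs, (a ∩ b).Nonempty := by
      rintro a ⟨haE, ham⟩ b ⟨hbE, hbm⟩
      by_cases hla : ℓ ∈ a
      · obtain ⟨x, hx⟩ := hbm a haE hla
        exact ⟨x, by rw [Finset.inter_comm]; exact hx⟩
      by_cases hlb : ℓ ∈ b
      · exact ham b hbE hlb
      by_contra hcon
      have hdis : Disjoint a b := by
        rw [Finset.disjoint_iff_inter_eq_empty]
        exact Finset.not_nonempty_iff_eq_empty.mp hcon
      have hbla : ∀ X, X ∈ Hedge P → ℓ ∈ X → (X ∩ a).Nonempty := by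
        intro X hX hlX
        obtain ⟨x, hx⟩ := ham X hX hlX
        exact ⟨x, by rw [Finset.inter_comm]; exact hx⟩
      have hblb : ∀ X, X ∈ Hedge P → ℓ ∈ X → (X ∩ b).Nonempty := by
        intro X hX hlX
        obtain ⟨x, hx⟩ := hbm X hX hlX
        exact ⟨x, by rw [Finset.inter_comm]; exact hx⟩
      have hbne : b.Nonempty := Finset.card_pos.mp (by have := hbE.1; omega)
      have hane : a.Nonempty := Finset.card_pos.mp (by have := haE.1; omega)
      have h1 : v.I {ℓ} b = 0 :=
        zero_blocked v hv hPv hla hbla b.card b le_rfl hbne hlb hdis.symm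
      have haC : a ⊆ Finset.univ \ (({ℓ} : PSet N) ∪ b) := by
        intro x hx
        rw [Finset.mem_sdiff, Finset.mem_union, Finset.mem_singleton]
        refine ⟨Finset.mem_univ x, ?_⟩
        rintro (rfl | hxb)
        · exact hla hx
        · exact Finset.disjoint_left.mp hdis hx hxb
      have hCne : (Finset.univ \ (({ℓ} : PSet N) ∪ b)).Nonempty :=
        ⟨hane.choose, haC hane.choose_spec⟩
      have hlC : ℓ ∉ Finset.univ \ (({ℓ} : PSet N) ∪ b) := by simp
      have hCb : Disjoint (Finset.univ \ (({ℓ} : PSet N) ∪ b)) b := by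
        rw [Finset.disjoint_left]
        intro x hx hxb
        rw [Finset.mem_sdiff, Finset.mem_union] at hx
        exact hx.2 (Or.inr hxb)
      have h2 : v.I {ℓ} (Finset.univ \ (({ℓ} : PSet N) ∪ b)) = 0 :=
        zero_blocked v hv hPv hlb hblb _ _ le_rfl hCne hlC hCb
      have hkid := key_id v (Finset.disjoint_singleton_left.mpr hlb) (B := b)
      have hS := Sl_pos v hv hPv hX₀ hlX₀
      rw [h1, h2] at hkid
      linarith
    have hclique : IsLineClique P Qs :=
      ⟨fun Y hY => hY.1, fun a ha b hb _ => hkey a ha b hb⟩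
    have hsub : ∀ Q' : Set (PSet N), IsLineClique P Q' →
        {X ∈ Hedge P | ℓ ∈ X} ⊆ Q' → Q' ⊆ Qs := by
      intro Q' hQ' hQl' Y hY
      refine ⟨hQ'.1 hY, fun f hf hlf => ?_⟩
      have hfQ' : f ∈ Q' := hQl' ⟨hf, hlf⟩
      by_cases hYf : Y = f
      · subst hYf
        rw [Finset.inter_self]
        exact Finset.card_pos.mp (by have := (hQ'.1 hY).1; omega)
      · exact hQ'.2 Y hY f hfQ' hYf
    have hmax : IsMaxClique P Qs := by
      refine ⟨⟨X₀, hQl ⟨hX₀, hlX₀⟩⟩, hclique, ?_⟩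
      intro Q' hQ' hsubQ
      exact Set.Subset.antisymm hsubQ
        (hsub Q' hQ' (fun X hX => hsubQ (hQl hX)))
    refine ⟨Qs, ⟨hmax, hQl⟩, ?_⟩
    rintro Q ⟨hQmax, hQsup⟩
    exact hQmax.2.2 Qs hclique (hsub Q hQmax.2.1 hQsup)

end HEC
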